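/- Let f(x,y) = x³ + yᵗAy + k₀x² + (yᵗr)x + k₁x + yᵗs and H̃ ≠ 0. Then there exist homogeneous polynomials L₀,…,L₄ with deg Lᵢ = i such that H̃²|∇f|⁶ − 6⁴(tr A)²x⁸ − (L₀x¹² + L₁x¹⁰ + L₂x⁸ + L₃x⁶ + L₄x⁴) has total degree at most 7, and moreover L₀ = 3⁶H̃². -/
import Mathlib


open MvPolynomial

/-- Squared norm of the gradient of a polynomial. -/
noncomputable def gradSq {n : ℕ} (f : MvPolynomial (Fin n) ℝ) : MvPolynomial (Fin n) ℝ :=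
  ∑ i, (pderiv i f) ^ 2

/-- Laplacian of a polynomial. -/
noncomputable def lap {n : ℕ} (f : MvPolynomial (Fin n) ℝ) : MvPolynomial (Fin n) ℝ :=
  ∑ i, pderiv i (pderiv i f)

/-- Δ₁ f = 2|∇f|²Δf − ∇fᵗ∇|∇f|². -/
noncomputable def delta1 {n : ℕ} (f : MvPolynomial (Fin n) ℝ) : MvPolynomial (Fin n) ℝ :=
  2 * gradSq f * lap f - ∑ i, pderiv i f * pderiv i (gradSq f)

/-- The cubic f(x,y) = x³ + yᵗAy + k₀x² + (yᵗr)x + k₁x + yᵗs, with x = X 0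
and y = (X 1, …, X m) in `MvPolynomial (Fin (m+1)) ℝ`. -/
noncomputable def fcmc (m : ℕ) (A : Matrix (Fin m) (Fin m) ℝ) (r s : Fin m → ℝ)
    (k₀ k₁ : ℝ) : MvPolynomial (Fin (m + 1)) ℝ :=
  X 0 ^ 3 + (∑ i, ∑ j, C (A i j) * X i.succ * X j.succ) + C k₀ * X 0 ^ 2
    + (∑ i, C (r i) * X i.succ) * X 0 + C k₁ * X 0 + ∑ i, C (s i) * X i.succ

/-! ### Auxiliary definitions -/

noncomputable def auxR (m : ℕ) (r : Fin m → ℝ) : MvPolynomial (Fin (m+1)) ℝ :=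
  ∑ i, C (r i) * X i.succ

noncomputable def auxW (m : ℕ) (A : Matrix (Fin m) (Fin m) ℝ) (t : Fin m) :
    MvPolynomial (Fin (m+1)) ℝ :=
  ∑ j, C (A t j) * X j.succ

noncomputable def auxQ (m : ℕ) (r : Fin m → ℝ) (k₀ : ℝ) : MvPolynomial (Fin (m+1)) ℝ :=
  C (12 * k₀) * X 0 + 6 * auxR m r

noncomputable def auxC (m : ℕ) (A : Matrix (Fin m) (Fin m) ℝ) (r : Fin m → ℝ)
    (k₀ k₁ : ℝ) : MvPolynomial (Fin (m+1)) ℝ :=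
  (C (2 * k₀) * X 0 + auxR m r) ^ 2 + C (6 * k₁) * X 0 ^ 2
    + ∑ t, (2 * auxW m A t + C (r t) * X 0) ^ 2

noncomputable def auxD (m : ℕ) (A : Matrix (Fin m) (Fin m) ℝ) (r s : Fin m → ℝ)
    (k₀ k₁ : ℝ) : MvPolynomial (Fin (m+1)) ℝ :=
  C (2 * k₁) * (C (2 * k₀) * X 0 + auxR m r)
    + ∑ t, C (2 * s t) * (2 * auxW m A t + C (r t) * X 0)

noncomputable def auxE (m : ℕ) (s : Fin m → ℝ) (k₁ : ℝ) : MvPolynomial (Fin (m+1)) ℝ :=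
  C (k₁ ^ 2 + ∑ t, (s t) ^ 2)

lemma pdX' (m : ℕ) (i j : Fin (m+1)) :
    pderiv i (X j : MvPolynomial (Fin (m+1)) ℝ) = if j = i then 1 else 0 := by
  by_cases h : j = i
  · subst h; simp
  · rw [pderiv_X_of_ne h]; simp [h]

lemma pd0 (m : ℕ) (A : Matrix (Fin m) (Fin m) ℝ) (r s : Fin m → ℝ) (k₀ k₁ : ℝ) :
    pderiv 0 (fcmc m A r s k₀ k₁)
      = 3 * X 0 ^ 2 + C (2*k₀) * X 0 + auxR m r + C k₁ := by
  simp only [fcmc, auxR, map_add, map_sum, pderiv_mul, pderiv_C, Derivation.leibniz_pow,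
    pdX', Fin.succ_ne_zero, if_false, if_true, map_mul]
  simp [map_ofNat]
  ring

lemma pdsucc (m : ℕ) (A : Matrix (Fin m) (Fin m) ℝ) (hA : A.IsSymm)
    (r s : Fin m → ℝ) (k₀ k₁ : ℝ) (t : Fin m) :
    pderiv t.succ (fcmc m A r s k₀ k₁)
      = 2 * auxW m A t + C (r t) * X 0 + C (s t) := by
  have hne : (0 : Fin (m+1)) ≠ t.succ := (Fin.succ_ne_zero t).symm
  simp only [fcmc, auxW, map_add, map_sum, pderiv_mul, pderiv_C, Derivation.leibniz_pow,
    pdX', hne, if_false, Fin.succ_inj]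
  have hsym : ∀ i, A i t = A t i := fun i => by
    conv_lhs => rw [← hA]
    rfl
  simp [Finset.mul_sum, mul_ite, ite_mul, Finset.sum_add_distrib, Finset.sum_ite_eq,
    Finset.sum_ite_eq', hsym, two_mul]

lemma gradSq_fcmc (m : ℕ) (A : Matrix (Fin m) (Fin m) ℝ) (hA : A.IsSymm)
    (r s : Fin m → ℝ) (k₀ k₁ : ℝ) :
    gradSq (fcmc m A r s k₀ k₁)
      = 9 * X 0 ^ 4 + X 0 ^ 2 * auxQ m r k₀ + auxC m A r k₀ k₁
        + auxD m A r s k₀ k₁ + auxE m s k₁ := by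
  rw [gradSq, Fin.sum_univ_succ, pd0]
  have hs : ∀ t : Fin m, t ∈ Finset.univ →
      (pderiv t.succ (fcmc m A r s k₀ k₁)) ^ 2
        = (2 * auxW m A t + C (r t) * X 0) ^ 2
          + C (2 * s t) * (2 * auxW m A t + C (r t) * X 0) + C ((s t) ^ 2) := by
    intro t _
    rw [pdsucc m A hA r s k₀ k₁ t, map_mul, map_ofNat, map_pow]
    ring
  rw [Finset.sum_congr rfl hs]
  simp only [Finset.sum_add_distrib, map_sum, auxQ, auxC, auxD, auxE, map_add, map_mul,
    map_pow, map_ofNat]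
  ring

/-- The key polynomial identity. -/
lemma key_id {R : Type*} [CommRing R] (x q c d e : R) :
    (9*x^4 + x^2*q + c + d + e)^3
      = 729*x^12 + 243*q*x^10 + (243*c+27*q^2)*x^8 + (243*x^2*d+54*q*c+q^3)*x^6
        + (243*x^4*e+54*x^2*q*d+27*c^2+3*q^2*c)*x^4
        + (3*(x^2*q)^2*(d+e) + 3*(x^2*q)*(c+d+e)^2 + (c+d+e)^3
            + 27*x^4*(2*(x^2*q)*e + 2*c*d + 2*c*e + d^2 + 2*d*e + e^2)) := by
  ring

section DegreeHelpers

variable {σ : Type*} {p q : MvPolynomial σ ℝ} {a b n : ℕ}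

lemma dmul (hp : p.totalDegree ≤ a) (hq : q.totalDegree ≤ b) :
    (p * q).totalDegree ≤ a + b :=
  (totalDegree_mul _ _).trans (add_le_add hp hq)

lemma dadd (hp : p.totalDegree ≤ n) (hq : q.totalDegree ≤ n) :
    (p + q).totalDegree ≤ n :=
  (totalDegree_add _ _).trans (sup_le hp hq)

lemma dpow (hp : p.totalDegree ≤ a) (k : ℕ) : (p ^ k).totalDegree ≤ k * a :=
  (totalDegree_pow _ _).trans (Nat.mul_le_mul_left _ hp)

lemma dnum (k : ℕ) [k.AtLeastTwo] :
    ((OfNat.ofNat k : MvPolynomial σ ℝ)).totalDegree ≤ 0 := by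
  rw [← map_ofNat (C : ℝ →+* MvPolynomial σ ℝ) k]
  exact le_of_eq (totalDegree_C _)

end DegreeHelpers

/-- The main degree-counting step. -/
lemma bigstep {n : ℕ} (x q c d e CH CT : MvPolynomial (Fin n) ℝ)
    (hx : x.totalDegree ≤ 1) (hq : q.totalDegree ≤ 1) (hc : c.totalDegree ≤ 2)
    (hd : d.totalDegree ≤ 1) (he : e.totalDegree ≤ 0) (hCH : CH.totalDegree ≤ 0) :
    (CH * (9*x^4 + x^2*q + c + d + e)^3 - CT*x^8
      - ((729*CH) * x^12 + (CH*(243*q))*x^10 + (CH*(243*c+27*q^2))*x^8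
          + (CH*(243*x^2*d+54*q*c+q^3))*x^6
          + (CH*(243*x^4*e+54*x^2*q*d+27*c^2+3*q^2*c) - CT*x^4)*x^4)).totalDegree ≤ 7 := by
  have hid : CH * (9*x^4 + x^2*q + c + d + e)^3 - CT*x^8
      - ((729*CH) * x^12 + (CH*(243*q))*x^10 + (CH*(243*c+27*q^2))*x^8
          + (CH*(243*x^2*d+54*q*c+q^3))*x^6
          + (CH*(243*x^4*e+54*x^2*q*d+27*c^2+3*q^2*c) - CT*x^4)*x^4)
      = CH * (3*(x^2*q)^2*(d+e) + 3*(x^2*q)*(c+d+e)^2 + (c+d+e)^3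
          + 27*x^4*(2*(x^2*q)*e + 2*c*d + 2*c*e + d^2 + 2*d*e + e^2)) := by
    ring
  rw [hid]
  have hb : (x^2*q).totalDegree ≤ 3 := le_trans (dmul (dpow hx 2) hq) (by norm_num)
  have hde : (d+e).totalDegree ≤ 1 := dadd hd (he.trans (by norm_num))
  have hw : (c+d+e).totalDegree ≤ 2 :=
    dadd (dadd hc (hd.trans (by norm_num))) (he.trans (by norm_num))
  have hE : (3*(x^2*q)^2*(d+e) + 3*(x^2*q)*(c+d+e)^2 + (c+d+e)^3
      + 27*x^4*(2*(x^2*q)*e + 2*c*d + 2*c*e + d^2 + 2*d*e + e^2)).totalDegree ≤ 7 := by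
    refine dadd (dadd (dadd ?_ ?_) ?_) ?_
    · exact le_trans (dmul (dmul (dnum 3) (dpow hb 2)) hde) (by norm_num)
    · exact le_trans (dmul (dmul (dnum 3) hb) (dpow hw 2)) (by norm_num)
    · exact le_trans (dpow hw 3) (by norm_num)
    · have hin : (2*(x^2*q)*e + 2*c*d + 2*c*e + d^2 + 2*d*e + e^2).totalDegree ≤ 3 := by
        refine dadd (dadd (dadd (dadd (dadd ?_ ?_) ?_) ?_) ?_) ?_
        · exact le_trans (dmul (dmul (dnum 2) hb) he) (by norm_num)
        · exact le_trans (dmul (dmul (dnum 2) hc) hd) (by norm_num)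
        · exact le_trans (dmul (dmul (dnum 2) hc) he) (by norm_num)
        · exact le_trans (dpow hd 2) (by norm_num)
        · exact le_trans (dmul (dmul (dnum 2) hd) he) (by norm_num)
        · exact le_trans (dpow he 2) (by norm_num)
      exact le_trans (dmul (dmul (dnum 27) (dpow hx 4)) hin) (by norm_num)
  exact le_trans (dmul hCH hE) (by norm_num)

theorem stmt_10 (m : ℕ) (A : Matrix (Fin m) (Fin m) ℝ) (hA : A.IsSymm)
    (r s : Fin m → ℝ) (k₀ k₁ : ℝ) (H : ℝ) (hH : H ≠ 0) :
    ∃ L : Fin 5 → MvPolynomial (Fin (m + 1)) ℝ,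
      (∀ i : Fin 5, (L i).IsHomogeneous (i : ℕ)) ∧
      (C (H ^ 2) * (gradSq (fcmc m A r s k₀ k₁)) ^ 3
          - C (6 ^ 4 * A.trace ^ 2) * X 0 ^ 8
          - (L 0 * X 0 ^ 12 + L 1 * X 0 ^ 10 + L 2 * X 0 ^ 8
              + L 3 * X 0 ^ 6 + L 4 * X 0 ^ 4)).totalDegree ≤ 7 ∧
      L 0 = C (3 ^ 6 * H ^ 2) := by
  set x : MvPolynomial (Fin (m+1)) ℝ := X 0 with hx
  set q := auxQ m r k₀ with hqdef
  set c := auxC m A r k₀ k₁ with hcdef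
  set d := auxD m A r s k₀ k₁ with hddef
  set e := auxE m s k₁ with hedef
  have hnum : ∀ (k : ℕ) [k.AtLeastTwo],
      ((OfNat.ofNat k : MvPolynomial (Fin (m+1)) ℝ)).IsHomogeneous 0 := by
    intro k _
    rw [← map_ofNat (C : ℝ →+* MvPolynomial (Fin (m+1)) ℝ) k]
    exact isHomogeneous_C _ _
  have hR : (auxR m r).IsHomogeneous 1 :=
    IsHomogeneous.sum _ _ _ fun i _ => (isHomogeneous_C _ _).mul (isHomogeneous_X _ _)
  have hW : ∀ t, (auxW m A t).IsHomogeneous 1 := fun t =>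
    IsHomogeneous.sum _ _ _ fun i _ => (isHomogeneous_C _ _).mul (isHomogeneous_X _ _)
  have hq : q.IsHomogeneous 1 := by
    rw [hqdef, auxQ]
    exact ((isHomogeneous_C _ _).mul (isHomogeneous_X _ _)).add ((hnum 6).mul hR)
  have hc : c.IsHomogeneous 2 := by
    rw [hcdef, auxC]
    refine IsHomogeneous.add (IsHomogeneous.add ?_ ?_) ?_
    · exact (((isHomogeneous_C _ _).mul (isHomogeneous_X _ _)).add hR).pow 2
    · exact (isHomogeneous_C _ _).mul ((isHomogeneous_X _ _).pow 2)
    · exact IsHomogeneous.sum _ _ _ fun t _ =>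
        (((hnum 2).mul (hW t)).add ((isHomogeneous_C _ _).mul (isHomogeneous_X _ _))).pow 2
  have hd : d.IsHomogeneous 1 := by
    rw [hddef, auxD]
    refine IsHomogeneous.add ?_ ?_
    · exact (isHomogeneous_C _ _).mul (((isHomogeneous_C _ _).mul (isHomogeneous_X _ _)).add hR)
    · exact IsHomogeneous.sum _ _ _ fun t _ =>
        (isHomogeneous_C _ _).mul (((hnum 2).mul (hW t)).add
          ((isHomogeneous_C _ _).mul (isHomogeneous_X _ _)))
  have he : e.IsHomogeneous 0 := by rw [hedef, auxE]; exact isHomogeneous_C _ _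
  have hxh : x.IsHomogeneous 1 := isHomogeneous_X _ _
  have hL1 : (C (H^2) * (243 * q) : MvPolynomial (Fin (m+1)) ℝ).IsHomogeneous 1 :=
    (isHomogeneous_C _ _).mul ((hnum 243).mul hq)
  have hL2 : (C (H^2) * (243 * c + 27 * q^2) : MvPolynomial (Fin (m+1)) ℝ).IsHomogeneous 2 :=
    (isHomogeneous_C _ _).mul (((hnum 243).mul hc).add ((hnum 27).mul (hq.pow 2)))
  have hL3 : (C (H^2) * (243 * x^2 * d + 54 * q * c + q^3)
      : MvPolynomial (Fin (m+1)) ℝ).IsHomogeneous 3 :=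
    (isHomogeneous_C _ _).mul
      (((((hnum 243).mul (hxh.pow 2)).mul hd).add (((hnum 54).mul hq).mul hc)).add (hq.pow 3))
  have hL4 : (C (H^2) * (243 * x^4 * e + 54 * x^2 * q * d + 27 * c^2 + 3 * q^2 * c)
      - C (6^4 * A.trace^2) * x^4 : MvPolynomial (Fin (m+1)) ℝ).IsHomogeneous 4 :=
    IsHomogeneous.sub
      ((isHomogeneous_C _ _).mul
        (((((((hnum 243).mul (hxh.pow 4)).mul he).add
          ((((hnum 54).mul (hxh.pow 2)).mul hq).mul hd)).add
            ((hnum 27).mul (hc.pow 2)))).add (((hnum 3).mul (hq.pow 2)).mul hc)))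
      ((isHomogeneous_C _ _).mul (hxh.pow 4))
  refine ⟨![C (3 ^ 6 * H ^ 2),
      C (H ^ 2) * (243 * q),
      C (H ^ 2) * (243 * c + 27 * q ^ 2),
      C (H ^ 2) * (243 * x ^ 2 * d + 54 * q * c + q ^ 3),
      C (H ^ 2) * (243 * x ^ 4 * e + 54 * x ^ 2 * q * d + 27 * c ^ 2 + 3 * q ^ 2 * c)
        - C (6 ^ 4 * A.trace ^ 2) * x ^ 4], ?_, ?_, rfl⟩
  · intro i
    fin_cases i
    · exact isHomogeneous_C _ _
    · exact hL1
    · exact hL2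
    · exact hL3
    · exact hL4
  · have hgrad : gradSq (fcmc m A r s k₀ k₁) = 9 * x ^ 4 + x ^ 2 * q + c + d + e := by
      rw [hx, hqdef, hcdef, hddef, hedef]; exact gradSq_fcmc m A hA r s k₀ k₁
    have hL0 : (C (3 ^ 6 * H ^ 2) : MvPolynomial (Fin (m+1)) ℝ) = 729 * C (H ^ 2) := by
      rw [map_mul, show ((3:ℝ) ^ 6) = (729 : ℝ) by norm_num, map_ofNat]
    simp only [Matrix.cons_val_zero, Matrix.cons_val_one, Matrix.head_cons,
      Matrix.cons_val_two, Matrix.tail_cons, Matrix.cons_val_three, Matrix.cons_val_four]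
    rw [hgrad, hL0]
    have hCH : (C (H ^ 2) : MvPolynomial (Fin (m+1)) ℝ).totalDegree ≤ 0 :=
      le_of_eq (totalDegree_C _)
    have hxd : x.totalDegree ≤ 1 := le_of_eq (totalDegree_X _)
    exact bigstep x q c d e (C (H ^ 2)) (C (6 ^ 4 * A.trace ^ 2)) hxd
      hq.totalDegree_le hc.totalDegree_le hd.totalDegree_le he.totalDegree_le hCH
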